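/- Let F = F(X₁,…,X_g) be the free group of rank g, let G be a group, let φ : F → G be a surjective homomorphism whose kernel is the normal closure of elements R₁,…,R_{g−1} ∈ F, let Φ : ℤ[F] → ℤ[G] be the induced ring homomorphism of integral group rings, and let I ⊆ ℤ[G] be the two-sided ideal generated by the elements Φ(∂R_j/∂X_i) for 1 ≤ i ≤ g, 1 ≤ j ≤ g−1. Then for any two elements w, w' ∈ F with φ(w) = φ(w') (i.e. any two lifts of the same element of G) and any i, the difference Φ(∂w/∂X_i) − Φ(∂w'/∂X_i) lies in I. In particular the images Φ(∂w/∂X_i) are well defined in the quotient ring ℤ[G]/I, independently of the choice of lift. -/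
import Mathlib


/-- Fox derivative well-definedness: if `φ : F(X₁,…,X_g) → G` is a presentation of `G`
with kernel the normal closure of the relators `R₁,…,R_{g−1}`, and `I ⊆ ℤ[G]` is the
two-sided ideal generated by the images under `Φ : ℤ[F] → ℤ[G]` of the Fox derivatives
of the relators, then for any two lifts `w, w'` of the same element of `G` the images
of their Fox derivatives agree modulo `I`. -/
theorem fox_derivative_well_defined_mod_ideal
    (g : ℕ) {G : Type*} [Group G]
    (φ : FreeGroup (Fin g) →* G) (hφ : Function.Surjective φ)
    (Rels : Fin (g - 1) → FreeGroup (Fin g))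
    (hker : φ.ker = Subgroup.normalClosure (Set.range Rels))
    -- the Fox derivatives `∂/∂Xᵢ`, as `ℤ`-linear maps on the integral group ring
    (D : Fin g →
      MonoidAlgebra ℤ (FreeGroup (Fin g)) →ₗ[ℤ] MonoidAlgebra ℤ (FreeGroup (Fin g)))
    (hD1 : ∀ i j : Fin g,
      D i (MonoidAlgebra.of ℤ (FreeGroup (Fin g)) (FreeGroup.of j)) =
        if j = i then 1 else 0)
    (hD2 : ∀ (i : Fin g) (u v : FreeGroup (Fin g)),
      D i (MonoidAlgebra.of ℤ (FreeGroup (Fin g)) (u * v)) =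
        D i (MonoidAlgebra.of ℤ (FreeGroup (Fin g)) u) +
          MonoidAlgebra.of ℤ (FreeGroup (Fin g)) u *
            D i (MonoidAlgebra.of ℤ (FreeGroup (Fin g)) v))
    -- the induced ring homomorphism `Φ : ℤ[F] → ℤ[G]`
    (Φ : MonoidAlgebra ℤ (FreeGroup (Fin g)) →+* MonoidAlgebra ℤ G)
    (hΦ : ∀ u : FreeGroup (Fin g),
      Φ (MonoidAlgebra.of ℤ (FreeGroup (Fin g)) u) = MonoidAlgebra.of ℤ G (φ u))
    -- the two-sided ideal generated by the images of the Fox derivatives of the relators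
    (I : TwoSidedIdeal (MonoidAlgebra ℤ G))
    (hI : I = TwoSidedIdeal.span
      {x | ∃ (i : Fin g) (j : Fin (g - 1)),
        x = Φ (D i (MonoidAlgebra.of ℤ (FreeGroup (Fin g)) (Rels j)))})
    (w w' : FreeGroup (Fin g)) (hww' : φ w = φ w') (i : Fin g) :
    Φ (D i (MonoidAlgebra.of ℤ (FreeGroup (Fin g)) w)) -
        Φ (D i (MonoidAlgebra.of ℤ (FreeGroup (Fin g)) w')) ∈ I := by
  classical
  set ofF := MonoidAlgebra.of ℤ (FreeGroup (Fin g)) with hofF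
  -- Fox derivative of 1 is 0
  have hD0 : ∀ i : Fin g, D i (ofF 1) = 0 := by
    intro i
    have h := hD2 i 1 1
    rw [mul_one, map_one, one_mul] at h
    exact (left_eq_add.mp h)
  -- Fox derivative of an inverse
  have hDinv : ∀ (i : Fin g) (u : FreeGroup (Fin g)),
      D i (ofF u⁻¹) = -(ofF u⁻¹ * D i (ofF u)) := by
    intro i u
    have h := hD2 i u⁻¹ u
    rw [inv_mul_cancel, hD0] at h
    exact eq_neg_of_add_eq_zero_left h.symm
  -- the subgroup of elements of the kernel whose Fox derivatives map into I
  let N : Subgroup (FreeGroup (Fin g)) :=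
  { carrier := {r | φ r = 1 ∧ ∀ i, Φ (D i (ofF r)) ∈ I}
    one_mem' := ⟨map_one φ, fun i => by rw [hD0, map_zero]; exact I.zero_mem⟩
    mul_mem' := by
      rintro a b ⟨ha1, ha2⟩ ⟨hb1, hb2⟩
      refine ⟨by rw [map_mul, ha1, hb1, one_mul], fun i => ?_⟩
      rw [hD2, map_add, map_mul]
      exact I.add_mem (ha2 i) (I.mul_mem_left _ _ (hb2 i))
    inv_mem' := by
      rintro a ⟨ha1, ha2⟩
      refine ⟨by rw [map_inv, ha1, inv_one], fun i => ?_⟩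
      rw [hDinv, map_neg, map_mul]
      exact I.neg_mem (I.mul_mem_left _ _ (ha2 i)) }
  have hN : N.Normal := by
    constructor
    rintro r ⟨hr1, hr2⟩ c
    refine ⟨by rw [map_mul, map_mul, hr1, mul_one, map_inv, mul_inv_cancel], fun i => ?_⟩
    have h1 : D i (ofF (c * r * c⁻¹)) =
        D i (ofF c) + ofF c * D i (ofF r) - ofF (c * r * c⁻¹) * D i (ofF c) := by
      rw [hD2 i (c * r) c⁻¹, hD2 i c r, hDinv, map_mul ofF (c * r) c⁻¹,
        mul_neg, ← mul_assoc, sub_eq_add_neg]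
    have hone : Φ (ofF (c * r * c⁻¹)) = 1 := by
      have hc : φ (c * r * c⁻¹) = 1 := by
        rw [map_mul, map_mul, hr1, mul_one, map_inv, mul_inv_cancel]
      rw [hΦ, hc, map_one]
    rw [h1, map_sub, map_add, map_mul, map_mul, hone, one_mul,
      add_sub_cancel_left]
    exact I.mul_mem_left _ _ (hr2 i)
  haveI := hN
  have hsub : Subgroup.normalClosure (Set.range Rels) ≤ N := by
    apply Subgroup.normalClosure_le_normal
    rintro _ ⟨j, rfl⟩
    have hmem : Rels j ∈ φ.ker := by
      rw [hker]; exact Subgroup.subset_normalClosure ⟨j, rfl⟩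
    refine ⟨hmem, fun i' => ?_⟩
    rw [hI]
    exact TwoSidedIdeal.subset_span ⟨i', j, rfl⟩
  have hr : w'⁻¹ * w ∈ N := by
    apply hsub
    rw [← hker, MonoidHom.mem_ker, map_mul, map_inv, hww', inv_mul_cancel]
  have hw : w' * (w'⁻¹ * w) = w := by group
  have h := hD2 i w' (w'⁻¹ * w)
  rw [hw] at h
  rw [h, map_add, map_mul, add_sub_cancel_left]
  exact I.mul_mem_left _ _ (hr.2 i)
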